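/- In a weighted directed graph where the score of a node is the average of the weights of its incoming edges (and 0 if it has none), changing the weights on the outgoing edges of a single node x of out-degree at most Δ changes the scores of at most Δ nodes, and hence changes the ranking of x (the number of nodes with strictly greater score) by at most Δ. -/

import Mathlib

open Finset
open scoped Classical

/-- The in-edges of a node `x` in the edge set `E`. -/
def inEdges {V : Type*} [DecidableEq V] (E : Finset (V × V)) (x : V) : Finset (V × V) :=
  E.filter (fun e => e.2 = x)

/-- The out-edges of a node `x` in the edge set `E`. -/
def outEdges {V : Type*} [DecidableEq V] (E : Finset (V × V)) (x : V) : Finset (V × V) :=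
  E.filter (fun e => e.1 = x)

/-- The score of a node: the average of the weights of its in-edges, 0 if it has none. -/
noncomputable def score {V : Type*} [DecidableEq V] (E : Finset (V × V)) (w : V × V → ℝ)
    (x : V) : ℝ :=
  if inEdges E x = ∅ then 0 else (∑ e ∈ inEdges E x, w e) / (inEdges E x).card

/-- The ranking of a node: the number of nodes with strictly greater score. -/
noncomputable def rank {V : Type*} [Fintype V] [DecidableEq V] (E : Finset (V × V))
    (w : V × V → ℝ) (x : V) : ℕ :=
  (Finset.univ.filter (fun y => score E w y > score E w x)).card

/-- In a weighted directed graph (no self-loops, weights in [−1,1], out-degrees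
at most Δ) where a node's score is the average of its in-edge weights, changing the weights
on the out-edges of a single node x changes the scores of at most Δ nodes, and hence changes
the ranking of x by at most Δ. -/
theorem out_edge_change_bound {V : Type*} [Fintype V] [DecidableEq V]
    (E : Finset (V × V)) (Δ : ℕ)
    (hloop : ∀ e ∈ E, e.1 ≠ e.2)
    (hdeg : ∀ y : V, (outEdges E y).card ≤ Δ)
    (w w' : V × V → ℝ)
    (hw : ∀ e ∈ E, -1 ≤ w e ∧ w e ≤ 1) (hw' : ∀ e ∈ E, -1 ≤ w' e ∧ w' e ≤ 1)
    (x : V) (hagree : ∀ e ∈ E, e.1 ≠ x → w e = w' e) :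
    (Finset.univ.filter (fun y => score E w y ≠ score E w' y)).card ≤ Δ ∧
      rank E w' x ≤ rank E w x + Δ ∧ rank E w x ≤ rank E w' x + Δ := by

  classical
  set S := Finset.univ.filter (fun y => score E w y ≠ score E w' y) with hS
  -- score unchanged unless some in-edge weight differs
  have key : ∀ y ∈ S, (x, y) ∈ E := by
    intro y hy
    simp only [hS, mem_filter, mem_univ, true_and] at hy
    by_contra hxy
    apply hy
    unfold score
    have : ∀ e ∈ inEdges E y, w e = w' e := by
      intro e he
      simp only [inEdges, mem_filter] at he
      apply hagree e he.1
      intro h1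
      apply hxy
      have : e = (x, y) := Prod.ext h1 he.2
      rw [← this]; exact he.1
    rw [Finset.sum_congr rfl this]
  have hScard : S.card ≤ Δ := by
    have : S.card ≤ (outEdges E x).card := by
      apply Finset.card_le_card_of_injOn (fun y => (x, y))
      · intro y hy
        simp only [outEdges, Finset.mem_coe, mem_filter]
        exact ⟨key y hy, trivial⟩
      · intro a _ b _ hab
        exact (Prod.mk.injEq _ _ _ _).mp hab |>.2
    exact this.trans (hdeg x)
  -- score of x is unchanged
  have hx : score E w x = score E w' x := by
    unfold score
    have : ∀ e ∈ inEdges E x, w e = w' e := by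
      intro e he
      simp only [inEdges, mem_filter] at he
      exact hagree e he.1 (he.2 ▸ hloop e he.1)
    rw [Finset.sum_congr rfl this]
  refine ⟨hScard, ?_, ?_⟩
  · have hsub : Finset.univ.filter (fun y => score E w' y > score E w' x) ⊆
        (Finset.univ.filter (fun y => score E w y > score E w x)) ∪ S := by
      intro y hy
      simp only [mem_filter, mem_univ, true_and] at hy
      simp only [hS, mem_union, mem_filter, mem_univ, true_and]
      by_cases h : score E w y = score E w' y
      · left; rw [h, hx]; exact hy
      · right; exact h
    calc rank E w' x ≤ ((Finset.univ.filter (fun y => score E w y > score E w x)) ∪ S).card :=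
          Finset.card_le_card hsub
      _ ≤ rank E w x + S.card := Finset.card_union_le _ _
      _ ≤ rank E w x + Δ := by omega
  · have hsub : Finset.univ.filter (fun y => score E w y > score E w x) ⊆
        (Finset.univ.filter (fun y => score E w' y > score E w' x)) ∪ S := by
      intro y hy
      simp only [mem_filter, mem_univ, true_and] at hy
      simp only [hS, mem_union, mem_filter, mem_univ, true_and]
      by_cases h : score E w y = score E w' y
      · left; rw [← h, ← hx]; exact hy
      · right; exact h
    calc rank E w x ≤ ((Finset.univ.filter (fun y => score E w' y > score E w' x)) ∪ S).card :=
          Finset.card_le_card hsub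
      _ ≤ rank E w' x + S.card := Finset.card_union_le _ _
      _ ≤ rank E w' x + Δ := by omega
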